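/- arXiv:2508.21709 — 4 statements merged into one kernel-verified Lean document; each statement's English description precedes it below -/
import Mathlib

section
/- Let A be a unital C*-algebra, let m ≥ 1 be an integer, and let ε be a real number with 0 ≤ ε < 2^(−m). Suppose v ∈ A satisfies ‖v*v − 1‖ ≤ ε, ‖vv* − 1‖ ≤ ε, and ‖v^m − 1‖ ≤ ε. Then there exists a unitary u ∈ A such that u^m = 1 and ‖u − v‖ ≤ 2^(m+2)·ε. -/
lemma cfc_mem_elemental' {A : Type*} [CStarAlgebra A] (f : ℂ → ℂ) (z : A) :
    cfc f z ∈ StarAlgebra.elemental ℂ z := by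
  refine cfc_cases (· ∈ StarAlgebra.elemental ℂ z) z f (zero_mem _) fun hf hz => ?_
  rw [cfcHom_eq_of_isStarNormal]
  exact SetLike.coe_mem _

lemma commute_of_mem_elemental {A : Type*} [CStarAlgebra A] {z w x : A}
    (hx : x ∈ StarAlgebra.elemental ℂ z) (h1 : Commute w z) (h2 : Commute w (star z)) :
    Commute w x := by
  induction hx using StarAlgebra.elemental.induction_on with
  | self => exact h1
  | star_self => exact h2
  | algebraMap r => exact Algebra.commute_algebraMap_right r w
  | add u hu v hv pu pv => exact pu.add_right pv
  | mul u hu v hv pu pv => exact pu.mul_right pv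
  | closure s hs hp t ht =>
      have hcl : IsClosed {y : A | Commute w y} := by
        have : {y : A | Commute w y} = {y : A | w * y - y * w = 0} := by
          ext y; simp [Commute, SemiconjBy, sub_eq_zero]
        rw [this]
        exact isClosed_eq (by fun_prop) continuous_const
      exact hcl.closure_subset_iff.mpr (fun u hu => hp u hu) ht

lemma abs_exp_mul_I_sub_one' (θ : ℝ) :
    ‖Complex.exp (θ * Complex.I) - 1‖ = 2 * |Real.sin (θ/2)| := by
  have h : Complex.exp (θ * Complex.I) - 1
      = ((Real.cos θ - 1 : ℝ) : ℂ) + ((Real.sin θ : ℝ) : ℂ) * Complex.I := by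
    rw [Complex.exp_mul_I]; push_cast; ring
  rw [h, Complex.norm_add_mul_I]
  have hc : Real.cos θ = Real.cos (2 * (θ/2)) := by ring_nf
  have h2 : (Real.cos θ - 1)^2 + (Real.sin θ)^2 = (2 * |Real.sin (θ/2)|)^2 := by
    have hs : Real.sin θ = 2 * Real.sin (θ/2) * Real.cos (θ/2) := by
      rw [show θ = 2 * (θ/2) by ring, Real.sin_two_mul]; ring_nf
    rw [hc, Real.cos_two_mul', hs]
    nlinarith [Real.sin_sq_add_cos_sq (θ/2), _root_.sq_abs (Real.sin (θ/2))]
  rw [h2, Real.sqrt_sq (by positivity)]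

lemma abs_exp_mul_I_sub_one_le (θ : ℝ) :
    ‖Complex.exp (θ * Complex.I) - 1‖ ≤ |θ| := by
  rw [abs_exp_mul_I_sub_one']
  have h1 := Real.abs_sin_le_abs (x := θ/2)
  have h2 : |θ/2| = |θ|/2 := by rw [abs_div]; norm_num
  linarith [h1, h2.le]

lemma le_abs_exp_mul_I_sub_one {θ : ℝ} (h : |θ| ≤ Real.pi) :
    2 / Real.pi * |θ| ≤ ‖Complex.exp (θ * Complex.I) - 1‖ := by
  rw [abs_exp_mul_I_sub_one']
  have hpi := Real.pi_pos
  have habs : |Real.sin (θ/2)| = Real.sin (|θ|/2) := by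
    rcases le_or_gt 0 θ with hθ | hθ
    · rw [abs_of_nonneg hθ] at h ⊢
      rw [abs_of_nonneg (Real.sin_nonneg_of_nonneg_of_le_pi (by linarith) (by linarith))]
    · rw [abs_of_neg hθ] at h ⊢
      rw [abs_of_nonpos (Real.sin_nonpos_of_nonpos_of_neg_pi_le (by linarith) (by linarith)),
        ← Real.sin_neg]
      ring_nf
  rw [habs]
  have hj := Real.mul_le_sin (x := |θ|/2) (by positivity) (by linarith)
  calc 2 / Real.pi * |θ| = 2 * (2 / Real.pi * (|θ|/2)) := by ring
    _ ≤ 2 * Real.sin (|θ|/2) := by linarith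

lemma inv_sqrt_close {ε t : ℝ} (hε0 : 0 ≤ ε) (hε : ε ≤ 1/2) (ht : |t - 1| ≤ ε) :
    |(Real.sqrt t)⁻¹ - 1| ≤ ε := by
  rw [abs_le] at ht
  have ht0 : (0:ℝ) < t := by linarith
  set s := Real.sqrt t with hs_def
  have hs : 0 < s := Real.sqrt_pos.mpr ht0
  have hs2 : s ^ 2 = t := Real.sq_sqrt ht0.le
  have hsi : s⁻¹ * s = 1 := inv_mul_cancel₀ hs.ne'
  have h1 : 1 ≤ (1 + ε) * s := by
    have hsq : 1 ≤ ((1 + ε) * s) ^ 2 := by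
      have : ((1 + ε) * s) ^ 2 = (1 + ε)^2 * t := by rw [mul_pow, hs2]
      nlinarith [sq_nonneg ε]
    by_contra hcon
    push_neg at hcon
    have := pow_lt_one₀ (by positivity) hcon (n := 2) (by norm_num)
    linarith
  have h2 : (1 - ε) * s ≤ 1 := by
    have hsq : ((1 - ε) * s) ^ 2 ≤ 1 := by
      have : ((1 - ε) * s) ^ 2 = (1 - ε)^2 * t := by rw [mul_pow, hs2]
      nlinarith [sq_nonneg ε]
    by_contra hcon
    push_neg at hcon
    have := one_lt_pow₀ hcon (n := 2) (by norm_num)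
    linarith
  have hup : s⁻¹ ≤ 1 + ε := by
    have := mul_le_mul_of_nonneg_left h1 (inv_nonneg.mpr hs.le)
    calc s⁻¹ = s⁻¹ * 1 := by ring
      _ ≤ s⁻¹ * ((1+ε)*s) := this
      _ = (1+ε) * (s⁻¹ * s) := by ring
      _ = 1 + ε := by rw [hsi]; ring
  have hlo : 1 - ε ≤ s⁻¹ := by
    have := mul_le_mul_of_nonneg_left h2 (inv_nonneg.mpr hs.le)
    calc 1 - ε = (s⁻¹ * s) * (1 - ε) := by rw [hsi]; ring
      _ = s⁻¹ * ((1-ε)*s) := by ring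
      _ ≤ s⁻¹ * 1 := this
      _ = s⁻¹ := by ring
  rw [abs_le]; constructor <;> linarith

lemma my_norm_pow_sub_pow_le {A : Type*} [NormedRing A] [NormOneClass A] (x y : A) {C : ℝ}
    (hC : 1 ≤ C) (hx : ‖x‖ ≤ C) (hy : ‖y‖ ≤ C) :
    ∀ n : ℕ, ‖x ^ n - y ^ n‖ ≤ n * C ^ (n - 1) * ‖x - y‖
  | 0 => by simp
  | (n+1) => by
    have ih := my_norm_pow_sub_pow_le x y hC hx hy n
    have key : x ^ (n+1) - y ^ (n+1) = x ^ n * (x - y) + (x ^ n - y ^ n) * y := by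
      rw [pow_succ, pow_succ]; noncomm_ring
    have hxn : ‖x ^ n‖ ≤ C ^ n :=
      (norm_pow_le x n).trans (pow_le_pow_left₀ (norm_nonneg x) hx n)
    have hCn : (n : ℝ) * C ^ (n - 1) * C ≤ n * C ^ n := by
      rcases Nat.eq_zero_or_pos n with rfl | hn
      · simp
      · have : C ^ (n - 1) * C = C ^ n := by
          rw [← pow_succ, Nat.sub_add_cancel hn]
        rw [mul_assoc, this]
    have h0 : (0:ℝ) ≤ ‖x - y‖ := norm_nonneg _
    have hC0 : (0:ℝ) ≤ C := by linarith
    calc ‖x ^ (n+1) - y ^ (n+1)‖ ≤ ‖x ^ n‖ * ‖x - y‖ + ‖x ^ n - y ^ n‖ * ‖y‖ := by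
          rw [key]
          exact (norm_add_le _ _).trans (add_le_add (norm_mul_le _ _) (norm_mul_le _ _))
      _ ≤ C ^ n * ‖x - y‖ + (n * C ^ (n-1) * ‖x - y‖) * C := by
          refine add_le_add (mul_le_mul_of_nonneg_right hxn h0) ?_
          exact mul_le_mul ih hy (norm_nonneg _) (by positivity)
      _ ≤ C ^ n * ‖x - y‖ + (n * C ^ n) * ‖x - y‖ := by
          refine add_le_add le_rfl ?_
          calc (n * C ^ (n-1) * ‖x - y‖) * C = (n * C ^ (n-1) * C) * ‖x - y‖ := by ring
            _ ≤ (n * C ^ n) * ‖x - y‖ := mul_le_mul_of_nonneg_right hCn h0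
      _ = (↑(n+1)) * C ^ n * ‖x - y‖ := by push_cast; ring
      _ = (↑(n+1)) * C ^ ((n+1) - 1) * ‖x - y‖ := by norm_num

lemma aux_b {A : Type*} [CStarAlgebra A] [Nontrivial A] {ε : ℝ} (hε0 : 0 ≤ ε) (hε2 : ε ≤ 1/2)
    (a : A) (ha : IsSelfAdjoint a) (hnorm : ‖a - 1‖ ≤ ε) :
    ∃ b : A, IsSelfAdjoint b ∧ ‖b - 1‖ ≤ ε ∧ b * a * b = 1 ∧ b * b * a = 1 ∧ a * (b * b) = 1 := by
  set f : ℝ → ℝ := fun t => (Real.sqrt t)⁻¹ with hf_def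
  have hspec : ∀ t ∈ spectrum ℝ a, |t - 1| ≤ ε := by
    intro t ht
    have h1 : t - 1 ∈ spectrum ℝ (a - algebraMap ℝ A 1) := by
      rw [← spectrum.sub_singleton_eq]
      exact Set.sub_mem_sub ht rfl
    have h2 := spectrum.norm_le_norm_of_mem h1
    rw [map_one, Real.norm_eq_abs] at h2
    exact h2.trans hnorm
  have hpos : ∀ t ∈ spectrum ℝ a, (0:ℝ) < t := by
    intro t ht
    have := hspec t ht
    rw [abs_le] at this
    linarith
  have hf_cont : ContinuousOn f (spectrum ℝ a) := by
    intro t ht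
    exact (Real.continuous_sqrt.continuousAt.inv₀
      (ne_of_gt (Real.sqrt_pos.mpr (hpos t ht)))).continuousWithinAt
  have hsimp : ∀ t ∈ spectrum ℝ a, f t * (t * f t) = 1 := by
    intro t ht
    have h0 := hpos t ht
    have hs : Real.sqrt t * Real.sqrt t = t := Real.mul_self_sqrt h0.le
    have hs0 : Real.sqrt t ≠ 0 := ne_of_gt (Real.sqrt_pos.mpr h0)
    simp only [hf_def]
    field_simp
    rw [Real.sq_sqrt h0.le]
  have hsimp2 : ∀ t ∈ spectrum ℝ a, f t * f t * t = 1 := by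
    intro t ht
    linear_combination hsimp t ht
  set b : A := cfc f a with hb_def
  have hid : ContinuousOn (fun t : ℝ => t) (spectrum ℝ a) := continuousOn_id
  have key1 : b * (a * b) = 1 := by
    calc b * (a * b) = cfc f a * (cfc (fun t : ℝ => t) a * cfc f a) := by rw [cfc_id' ℝ a ha]
      _ = cfc f a * cfc (fun t : ℝ => t * f t) a := by rw [cfc_mul _ f a hid hf_cont]
      _ = cfc (fun t : ℝ => f t * (t * f t)) a := by rw [cfc_mul f (fun t : ℝ => t * f t) a hf_cont (hid.mul hf_cont)]
      _ = cfc (fun _ : ℝ => (1:ℝ)) a := cfc_congr hsimp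
      _ = 1 := by rw [cfc_const_one ℝ a]
  have key2 : b * b * a = 1 := by
    calc b * b * a = cfc f a * cfc f a * cfc (fun t : ℝ => t) a := by rw [cfc_id' ℝ a ha]
      _ = cfc (fun t : ℝ => f t * f t) a * cfc (fun t : ℝ => t) a := by
          rw [cfc_mul f f a hf_cont hf_cont]
      _ = cfc (fun t : ℝ => f t * f t * t) a := by
          rw [← cfc_mul (fun t : ℝ => f t * f t) (fun t : ℝ => t) a (hf_cont.mul hf_cont) hid]
      _ = cfc (fun _ : ℝ => (1:ℝ)) a := cfc_congr hsimp2
      _ = 1 := by rw [cfc_const_one ℝ a]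
  have key3 : a * (b * b) = 1 := by
    calc a * (b * b) = cfc (fun t : ℝ => t) a * (cfc f a * cfc f a) := by rw [cfc_id' ℝ a ha]
      _ = cfc (fun t : ℝ => t) a * cfc (fun t : ℝ => f t * f t) a := by
          rw [cfc_mul f f a hf_cont hf_cont]
      _ = cfc (fun t : ℝ => t * (f t * f t)) a := by
          rw [← cfc_mul (fun t : ℝ => t) (fun t : ℝ => f t * f t) a hid (hf_cont.mul hf_cont)]
      _ = cfc (fun _ : ℝ => (1:ℝ)) a := cfc_congr (by
          intro t ht
          linear_combination hsimp2 t ht)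
      _ = 1 := by rw [cfc_const_one ℝ a]
  refine ⟨b, cfc_predicate f a, ?_, by rw [mul_assoc]; exact key1, key2, key3⟩
  have hsub : b - 1 = cfc (fun t => f t - 1) a := by
    rw [cfc_sub _ _ a hf_cont continuousOn_const, cfc_const_one ℝ a]
  rw [hsub]
  exact norm_cfc_le hε0 fun t ht => by
    rw [Real.norm_eq_abs]; exact inv_sqrt_close hε0 hε2 (hspec t ht)

lemma nat_le_two_pow_pred : ∀ m : ℕ, 1 ≤ m → (m:ℝ) ≤ 2^(m-1) := by
  intro m hm
  induction m with
  | zero => norm_num at hm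
  | succ n ih =>
      rcases Nat.eq_zero_or_pos n with rfl | hn
      · norm_num
      · have h := ih hn
        have h1 : (2:ℝ)^(n-1) * 2 = 2^n := by
          rw [← pow_succ, Nat.sub_add_cancel hn]
        have hn1 : (1:ℝ) ≤ n := by exact_mod_cast hn
        push_cast
        calc (n:ℝ) + 1 ≤ 2^(n-1) + 2^(n-1) := by
              have : (1:ℝ) ≤ 2^(n-1) := one_le_pow₀ (by norm_num)
              linarith
          _ = 2^n := by linarith [h1]
          _ = 2^((n+1)-1) := by norm_num

set_option maxHeartbeats 2000000 in
/-- **Stability of approximate order-`m` unitaries** (the paper's Lemma `U-Stab`).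
If `v` in a unital C*-algebra `A` is an `ε`-approximate unitary of approximate order `m`
(with `0 ≤ ε < 2^(-m)`), then there is a genuine unitary `u` with `u ^ m = 1`
and `‖u - v‖ ≤ 2^(m+2) * ε`. -/
theorem stmt_0 {A : Type*} [CStarAlgebra A]
    (m : ℕ) (hm : 1 ≤ m) (ε : ℝ) (hε0 : 0 ≤ ε) (hε : ε < (2 : ℝ) ^ (-(m : ℤ)))
    (v : A)
    (h1 : ‖star v * v - 1‖ ≤ ε) (h2 : ‖v * star v - 1‖ ≤ ε)
    (h3 : ‖v ^ m - 1‖ ≤ ε) :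
    ∃ u : A, u ∈ unitary A ∧ u ^ m = 1 ∧ ‖u - v‖ ≤ 2 ^ (m + 2) * ε := by
  rcases subsingleton_or_nontrivial A with hA | hA
  · refine ⟨1, one_mem _, one_pow m, ?_⟩
    rw [Subsingleton.elim ((1:A) - v) 0, norm_zero]
    positivity
  -- numeric preliminaries
  have hm1 : (1:ℝ) ≤ (m:ℝ) := by exact_mod_cast hm
  have hm0 : (0:ℝ) < (m:ℝ) := by linarith
  have hε2m : ε ≤ ((2:ℝ)^m)⁻¹ := by
    rw [zpow_neg, zpow_natCast] at hε; exact hε.le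
  have h2m : (2:ℝ) ≤ 2^m := by
    calc (2:ℝ) = 2^1 := (pow_one 2).symm
      _ ≤ 2^m := pow_le_pow_right₀ one_le_two hm
  have hε12 : ε ≤ 1/2 := by
    have h := inv_anti₀ (by norm_num : (0:ℝ) < 2) h2m
    have h2' : ((2:ℝ))⁻¹ = 1/2 := by norm_num
    linarith [hε2m.trans h]
  have hmε : (m:ℝ) * ε ≤ 1/2 := by
    have hple := nat_le_two_pow_pred m hm
    have hp : (2:ℝ)^(m-1) * 2 = 2^m := by rw [← pow_succ, Nat.sub_add_cancel hm]
    have hhalf : (2:ℝ)^(m-1) * ((2:ℝ)^m)⁻¹ = 1/2 := by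
      rw [← hp]
      have : ((2:ℝ)^(m-1)) ≠ 0 := by positivity
      field_simp
    calc (m:ℝ)*ε ≤ 2^(m-1) * ((2:ℝ)^m)⁻¹ :=
          mul_le_mul hple hε2m hε0 (by positivity)
      _ = 1/2 := hhalf
  -- polar-type decomposition
  obtain ⟨b, hb_sa, hb1, hbab, hbba, habb⟩ :=
    aux_b hε0 hε12 (star v * v) (IsSelfAdjoint.star_mul_self v) h1
  obtain ⟨b', hb'_sa, hb'1, hbab', hbba', habb'⟩ :=
    aux_b hε0 hε12 (v * star v) (IsSelfAdjoint.mul_star_self v) h2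
  have hxv : (b * b * star v) * v = 1 := by
    rw [mul_assoc]; exact hbba
  have hvy : v * (star v * (b' * b')) = 1 := by
    rw [← mul_assoc]; exact habb'
  have hv_unit : IsUnit v := by
    have hxy : b * b * star v = star v * (b' * b') := by
      calc b*b*star v = (b*b*star v) * (v * (star v * (b'*b'))) := by rw [hvy, mul_one]
        _ = ((b*b*star v) * v) * (star v * (b'*b')) := by noncomm_ring
        _ = star v * (b'*b') := by rw [hxv, one_mul]
    exact ⟨⟨v, b*b*star v, by rw [hxy]; exact hvy, hxv⟩, rfl⟩
  have hb_unit : IsUnit b := by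
    refine ⟨⟨b, (star v * v) * b, ?_, ?_⟩, rfl⟩
    · rw [← mul_assoc]; exact hbab
    · rw [mul_assoc]; exact habb
  set w := v * b with hw_def
  have hw_star : star w * w = 1 := by
    have hsw : star w = b * star v := by rw [hw_def, star_mul, hb_sa.star_eq]
    calc star w * w = (b * star v) * (v * b) := by rw [hsw, hw_def]
      _ = b * (star v * v) * b := by simp only [mul_assoc]
      _ = 1 := hbab
  have hw_mem : w ∈ unitary A := IsUnit.mem_unitary_of_star_mul_self (hv_unit.mul hb_unit) hw_star
  have hw_norm : ‖w‖ = 1 := by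
    have h := CStarRing.norm_star_mul_self (x := w)
    rw [hw_star, norm_one] at h
    nlinarith [norm_nonneg w]
  have hv_norm : ‖v‖ ≤ 1 + ε := by
    have h := CStarRing.norm_star_mul_self (x := v)
    have hsv : ‖star v * v‖ ≤ 1 + ε := by
      calc ‖star v * v‖ = ‖(star v * v - 1) + 1‖ := by rw [sub_add_cancel]
        _ ≤ ‖star v * v - 1‖ + ‖(1:A)‖ := norm_add_le _ _
        _ ≤ ε + 1 := by rw [norm_one]; linarith
        _ = 1 + ε := by ring
    nlinarith [norm_nonneg v]
  have hwv : ‖w - v‖ ≤ (1+ε) * ε := by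
    have hsub : w - v = v * (b - 1) := by rw [hw_def, mul_sub, mul_one]
    rw [hsub]
    calc ‖v * (b-1)‖ ≤ ‖v‖ * ‖b-1‖ := norm_mul_le _ _
      _ ≤ (1+ε) * ε := mul_le_mul hv_norm hb1 (norm_nonneg _) (by linarith)
  have hexp2 : (1+ε)^m ≤ 2 := by
    have h1' : (1+ε) ≤ Real.exp ε := by linarith [Real.add_one_le_exp ε]
    have h5' : Real.exp (1/2:ℝ) ≤ 2 := by
      have he : Real.exp (1/2:ℝ) * Real.exp (1/2:ℝ) = Real.exp 1 := by
        rw [← Real.exp_add]; norm_num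
      nlinarith [Real.exp_one_lt_d9, Real.exp_pos (1/2:ℝ)]
    calc (1+ε)^m ≤ Real.exp ε ^ m := pow_le_pow_left₀ (by linarith) h1' m
      _ = Real.exp (m * ε) := (Real.exp_nat_mul ε m).symm
      _ ≤ Real.exp (1/2) := Real.exp_le_exp.mpr hmε
      _ ≤ 2 := h5'
  have hwm : ‖w^m - v^m‖ ≤ 2*m*ε := by
    have h := my_norm_pow_sub_pow_le w v (C := 1+ε) (by linarith)
      (by rw [hw_norm]; linarith) hv_norm m
    have hps : (1+ε)^(m-1) * (1+ε) = (1+ε)^m := by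
      rw [← pow_succ, Nat.sub_add_cancel hm]
    calc ‖w^m - v^m‖ ≤ m * (1+ε)^(m-1) * ‖w - v‖ := h
      _ ≤ m * (1+ε)^(m-1) * ((1+ε)*ε) := by
          refine mul_le_mul_of_nonneg_left hwv ?_
          positivity
      _ = m * ((1+ε)^m) * ε := by rw [← hps]; ring
      _ ≤ m * 2 * ε := by
          have := mul_le_mul_of_nonneg_left hexp2 hm0.le
          nlinarith [hε0]
      _ = 2*m*ε := by ring
  have hδ : ‖w^m - 1‖ ≤ (2*m+1)*ε := by
    calc ‖w^m - 1‖ = ‖(w^m - v^m) + (v^m - 1)‖ := by rw [sub_add_sub_cancel]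
      _ ≤ ‖w^m - v^m‖ + ‖v^m - 1‖ := norm_add_le _ _
      _ ≤ 2*m*ε + ε := add_le_add hwm h3
      _ = (2*m+1)*ε := by ring
  have hδ32 : (2*(m:ℝ)+1)*ε ≤ 3/2 := by nlinarith [hmε, hε12, hε0]
  set z := w^m with hz_def
  have hz_mem : z ∈ unitary A := pow_mem hw_mem m
  haveI hz_normal : IsStarNormal z :=
    ⟨(Unitary.star_mul_self_of_mem hz_mem).trans (Unitary.mul_star_self_of_mem hz_mem).symm⟩
  have hspecabs : ∀ μ ∈ spectrum ℂ z, ‖μ‖ = 1 := by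
    intro μ hμ
    have := spectrum.subset_circle_of_unitary hz_mem hμ
    rwa [Metric.mem_sphere, dist_zero_right] at this
  have hspecd : ∀ μ ∈ spectrum ℂ z, ‖μ - 1‖ ≤ (2*m+1)*ε := by
    intro μ hμ
    have h1' : μ - 1 ∈ spectrum ℂ (z - algebraMap ℂ A 1) := by
      rw [← spectrum.sub_singleton_eq]; exact Set.sub_mem_sub hμ rfl
    have h2' := spectrum.norm_le_norm_of_mem h1'
    rw [map_one] at h2'
    exact h2'.trans hδ
  have hslit : ∀ μ ∈ spectrum ℂ z, μ ∈ Complex.slitPlane := by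
    intro μ hμ
    rw [Complex.mem_slitPlane_iff]
    by_contra hcon
    push_neg at hcon
    obtain ⟨hre, him⟩ := hcon
    have habs := hspecabs μ hμ
    have hμre : (μ.re : ℂ) = μ := Complex.ext rfl (by simp [him])
    rw [← hμre, Complex.norm_real, Real.norm_eq_abs] at habs
    have hμeq : μ = -1 := by
      have : μ.re = -1 := by cases abs_cases μ.re <;> linarith
      rw [← hμre, this]; norm_num
    have hd := hspecd μ hμ
    rw [hμeq] at hd
    norm_num at hd
    linarith [hδ32]
  have hargle : ∀ μ ∈ spectrum ℂ z, |Complex.arg μ| ≤ Real.pi/2 * ((2*m+1)*ε) := by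
    intro μ hμ
    have habs := hspecabs μ hμ
    have hexpμ : Complex.exp ((Complex.arg μ : ℂ) * Complex.I) = μ := by
      have h := Complex.norm_mul_exp_arg_mul_I μ
      rwa [habs, Complex.ofReal_one, one_mul] at h
    have hlow := le_abs_exp_mul_I_sub_one (θ := Complex.arg μ) (Complex.abs_arg_le_pi μ)
    rw [hexpμ] at hlow
    have hd := hspecd μ hμ
    have hπ := Real.pi_pos
    calc |Complex.arg μ| = (Real.pi/2) * (2/Real.pi * |Complex.arg μ|) := by field_simp
      _ ≤ (Real.pi/2) * ((2*m+1)*ε) :=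
          mul_le_mul_of_nonneg_left (hlow.trans hd) (by positivity)
  set g : ℂ → ℂ := fun μ => Complex.exp ((↑(-(Complex.arg μ) / m) : ℂ) * Complex.I) with hg_def
  have hg_cont : ContinuousOn g (spectrum ℂ z) := by
    intro μ hμ
    have h1' : ContinuousAt Complex.arg μ := Complex.continuousAt_arg (hslit μ hμ)
    exact (((Complex.continuous_ofReal.continuousAt.comp
      ((h1'.neg).div_const (m:ℝ)))).mul continuousAt_const).cexp.continuousWithinAt
  have hgstar : ∀ μ : ℂ, star (g μ) = Complex.exp ((↑((Complex.arg μ) / m) : ℂ) * Complex.I) := by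
    intro μ
    simp only [hg_def]
    rw [Complex.star_def, ← Complex.exp_conj, map_mul, Complex.conj_I, Complex.conj_ofReal]
    push_cast
    ring_nf
  have hgmul : ∀ μ : ℂ, star (g μ) * g μ = 1 := by
    intro μ
    rw [hgstar μ]
    simp only [hg_def]
    rw [← Complex.exp_add, ← add_mul, ← Complex.ofReal_add]
    have : Complex.arg μ / m + -(Complex.arg μ) / m = 0 := by ring
    rw [this]
    simp
  have hgmul' : ∀ μ : ℂ, g μ * star (g μ) = 1 := by
    intro μ
    rw [hgstar μ]
    simp only [hg_def]
    rw [← Complex.exp_add, ← add_mul, ← Complex.ofReal_add]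
    have : -(Complex.arg μ) / m + Complex.arg μ / m = 0 := by ring
    rw [this]
    simp
  set c := cfc g z with hc_def
  have hstar_g_cont : ContinuousOn (fun μ => star (g μ)) (spectrum ℂ z) := hg_cont.star
  have hc_unitary : c ∈ unitary A := by
    rw [Unitary.mem_iff]
    constructor
    · rw [hc_def, ← cfc_star, ← cfc_mul _ _ z hstar_g_cont hg_cont]
      calc cfc (fun μ => star (g μ) * g μ) z = cfc (fun _ : ℂ => (1:ℂ)) z :=
            cfc_congr (fun μ _ => hgmul μ)
        _ = 1 := by rw [cfc_const_one ℂ z]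
    · rw [hc_def, ← cfc_star, ← cfc_mul _ _ z hg_cont hstar_g_cont]
      calc cfc (fun μ => g μ * star (g μ)) z = cfc (fun _ : ℂ => (1:ℂ)) z :=
            cfc_congr (fun μ _ => hgmul' μ)
        _ = 1 := by rw [cfc_const_one ℂ z]
  have hcw : Commute w c := by
    have hwz : Commute w z := (Commute.refl w).pow_right m
    have hwsw : Commute w (star w) := by
      show w * star w = star w * w
      rw [Unitary.mul_star_self_of_mem hw_mem, Unitary.star_mul_self_of_mem hw_mem]
    have hwzs : Commute w (star z) := by
      rw [hz_def, star_pow]; exact hwsw.pow_right m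
    exact commute_of_mem_elemental (cfc_mem_elemental' g z) hwz hwzs
  have hmC : ((m:ℂ)) ≠ 0 := by exact_mod_cast hm0.ne'
  have hu_pow : (w * c)^m = 1 := by
    have hgpow : ∀ μ ∈ spectrum ℂ z, μ * g μ ^ m = 1 := by
      intro μ hμ
      have habs := hspecabs μ hμ
      have hexpμ : Complex.exp ((Complex.arg μ : ℂ) * Complex.I) = μ := by
        have h := Complex.norm_mul_exp_arg_mul_I μ
        rwa [habs, Complex.ofReal_one, one_mul] at h
      have harg : (m:ℂ) * ((↑(-(Complex.arg μ)/m) : ℂ) * Complex.I)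
          = (↑(-(Complex.arg μ)) : ℂ) * Complex.I := by
        push_cast
        field_simp
      have hpow1 : g μ ^ m = Complex.exp ((↑(-(Complex.arg μ)) : ℂ) * Complex.I) := by
        simp only [hg_def]
        rw [← Complex.exp_nat_mul, harg]
      calc μ * g μ ^ m
          = Complex.exp ((Complex.arg μ : ℂ) * Complex.I)
            * Complex.exp ((↑(-(Complex.arg μ)) : ℂ) * Complex.I) := by rw [hpow1, hexpμ]
        _ = 1 := by
            rw [← Complex.exp_add, ← add_mul, ← Complex.ofReal_add,
              show Complex.arg μ + -(Complex.arg μ) = 0 by ring]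
            simp
    have hcm : c ^ m = cfc (fun μ => g μ ^ m) z := by
      rw [hc_def, ← cfc_pow g m z hg_cont]
    have hzc : z * cfc (fun μ => g μ ^ m) z = 1 := by
      calc z * cfc (fun μ => g μ ^ m) z
          = cfc (fun μ : ℂ => μ) z * cfc (fun μ => g μ ^ m) z := by rw [cfc_id' ℂ z]
        _ = cfc (fun μ : ℂ => μ * g μ ^ m) z := (cfc_mul _ _ z continuousOn_id (hg_cont.pow m)).symm
        _ = cfc (fun _ : ℂ => (1:ℂ)) z := cfc_congr hgpow
        _ = 1 := by rw [cfc_const_one ℂ z]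
    calc (w*c)^m = w^m * c^m := hcw.mul_pow m
      _ = z * cfc (fun μ => g μ ^ m) z := by rw [← hz_def, hcm]
      _ = 1 := hzc
  have hc1 : ‖c - 1‖ ≤ Real.pi/2 * ((2*m+1)*ε) / m := by
    have hsub : c - 1 = cfc (fun μ => g μ - 1) z := by
      rw [hc_def, cfc_sub _ _ z hg_cont continuousOn_const, cfc_const_one ℂ z]
    rw [hsub]
    have hπ := Real.pi_pos
    refine norm_cfc_le (by positivity) fun μ hμ => ?_
    simp only [hg_def]
    refine (abs_exp_mul_I_sub_one_le (-(Complex.arg μ)/m)).trans ?_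
    rw [abs_div, abs_neg, Nat.abs_cast]
    gcongr
    exact hargle μ hμ
  refine ⟨w * c, mul_mem hw_mem hc_unitary, hu_pow, ?_⟩
  have hsplit : w * c - v = w * (c - 1) + (w - v) := by noncomm_ring
  have hwc : ‖w * (c - 1)‖ ≤ Real.pi/2 * ((2*m+1)*ε) / m := by
    calc ‖w * (c - 1)‖ ≤ ‖w‖ * ‖c - 1‖ := norm_mul_le _ _
      _ = ‖c - 1‖ := by rw [hw_norm, one_mul]
      _ ≤ _ := hc1
  have hnum : Real.pi/2 * ((2*m+1)*ε) / m ≤ 6 * ε := by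
    rw [div_le_iff₀ hm0]
    have hπ4 := Real.pi_le_four
    have hπ0 := Real.pi_pos
    nlinarith [mul_nonneg (mul_nonneg (by linarith : (0:ℝ) ≤ 4 - Real.pi)
        (by linarith : (0:ℝ) ≤ 2*(m:ℝ)+1)) hε0,
      mul_nonneg (by linarith : (0:ℝ) ≤ (m:ℝ) - 1) hε0]
  have hεε : (1+ε)*ε ≤ (3/2)*ε := by nlinarith [hε12, hε0]
  have h8 : (8:ℝ) ≤ 2^(m+2) := by
    calc (8:ℝ) = 2^3 := by norm_num
      _ ≤ 2^(m+2) := pow_le_pow_right₀ one_le_two (by omega)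
  calc ‖w * c - v‖ = ‖w * (c - 1) + (w - v)‖ := by rw [hsplit]
    _ ≤ ‖w * (c - 1)‖ + ‖w - v‖ := norm_add_le _ _
    _ ≤ 6*ε + (3/2)*ε := add_le_add (hwc.trans hnum) (hwv.trans hεε)
    _ ≤ 8 * ε := by linarith
    _ ≤ 2^(m+2) * ε := mul_le_mul_of_nonneg_right h8 hε0
end

section
/- Let A be a unital C*-algebra, let m ≥ 1 be an integer, and let ε be a real number with 0 ≤ ε < 2^(−m). Suppose v ∈ A satisfies ‖v*v − 1‖ ≤ ε, ‖vv* − 1‖ ≤ ε, and ‖v^m − 1‖ ≤ ε. Then the unitary u₀ := v·(vv*)^(−1/2) satisfies ‖u₀^m − 1‖ ≤ 2^(m+1)·ε. -/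
-- telescoping
lemma aux_pow_sub_pow {A : Type*} [NormedRing A] (x y : A) {C : ℝ}
    (hx : ‖x‖ ≤ C) (hy : ‖y‖ ≤ C) :
    ∀ n : ℕ, ‖x ^ (n + 1) - y ^ (n + 1)‖ ≤ (n + 1) * C ^ n * ‖x - y‖ := by
  have hC : 0 ≤ C := le_trans (norm_nonneg x) hx
  intro n
  induction n with
  | zero => simp
  | succ n ih =>
    have key : x ^ (n + 2) - y ^ (n + 2) = x ^ (n + 1) * (x - y) + (x ^ (n + 1) - y ^ (n + 1)) * y := by
      simp only [mul_sub, sub_mul, pow_succ]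
      abel
    calc ‖x ^ (n + 2) - y ^ (n + 2)‖
        ≤ ‖x ^ (n + 1) * (x - y)‖ + ‖(x ^ (n + 1) - y ^ (n + 1)) * y‖ := by
          rw [key]; exact norm_add_le _ _
      _ ≤ ‖x ^ (n + 1)‖ * ‖x - y‖ + ‖x ^ (n + 1) - y ^ (n + 1)‖ * ‖y‖ := by
          gcongr <;> exact norm_mul_le _ _
      _ ≤ C ^ (n + 1) * ‖x - y‖ + ((n + 1) * C ^ n * ‖x - y‖) * C := by
          refine add_le_add ?_ ?_
          · refine mul_le_mul_of_nonneg_right ?_ (norm_nonneg _)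
            exact le_trans (norm_pow_le' x (Nat.succ_pos n)) (pow_le_pow_left₀ (norm_nonneg x) hx _)
          · exact mul_le_mul ih hy (norm_nonneg y) (by positivity)
      _ ≤ (↑(n + 1) + 1) * C ^ (n + 1) * ‖x - y‖ := le_of_eq (by push_cast; ring)

lemma aux_nat1 : ∀ m : ℕ, 1 ≤ m → 2 * m ≤ 2 ^ m := by
  intro m hm
  induction m with
  | zero => omega
  | succ n ih =>
    rcases Nat.eq_or_lt_of_le hm with h | h
    · have hn : n = 0 := by omega
      subst hn; norm_num
    · have h1 : 1 ≤ n := by omega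
      have := ih h1
      have : 2 ≤ 2 ^ n := by
        calc 2 = 2 ^ 1 := rfl
        _ ≤ 2 ^ n := Nat.pow_le_pow_right (by norm_num) h1
      rw [pow_succ]; omega

lemma aux_nat2 : ∀ m : ℕ, 1 ≤ m → 3 * m + 1 ≤ 2 ^ (m + 1) := by
  intro m hm
  induction m with
  | zero => omega
  | succ n ih =>
    rcases Nat.eq_or_lt_of_le hm with h | h
    · simp [← h]
    · have h1 : 1 ≤ n := by omega
      have h2 := ih h1
      have h3 : 4 ≤ 2 ^ (n + 1) := by
        calc 4 = 2 ^ 2 := rfl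
        _ ≤ 2 ^ (n + 1) := Nat.pow_le_pow_right (by norm_num) (by omega)
      rw [pow_succ]; omega

lemma aux_arith (m : ℕ) (hm : 1 ≤ m) (ε : ℝ) (hε0 : 0 ≤ ε) (hε : ε ≤ ((2 : ℝ) ^ m)⁻¹) :
    (m : ℝ) * (1 + ε) ^ (2 * m) ≤ 2 ^ (m + 1) - 1 := by
  have h2m : (2 * m : ℝ) ≤ 2 ^ m := by exact_mod_cast aux_nat1 m hm
  have hpow : (0 : ℝ) < 2 ^ m := by positivity
  have hε2m : ε * 2 ^ m ≤ 1 := by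
    calc ε * 2 ^ m ≤ ((2:ℝ) ^ m)⁻¹ * 2 ^ m := by gcongr
    _ = 1 := inv_mul_cancel₀ (ne_of_gt hpow)
  have hmε : (2 * m : ℝ) * ε ≤ 1 := by nlinarith
  have h1 : (1 + ε) ^ (2 * m) ≤ Real.exp 1 := by
    calc (1 + ε) ^ (2 * m) ≤ (Real.exp ε) ^ (2 * m) := by
          apply pow_le_pow_left₀ (by linarith)
          linarith [Real.add_one_le_exp ε]
    _ = Real.exp ((2 * m : ℕ) * ε) := by rw [← Real.exp_nat_mul]
    _ ≤ Real.exp 1 := by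
          apply Real.exp_le_exp.mpr
          push_cast
          exact hmε
  have h3 : Real.exp 1 ≤ 3 := le_of_lt (lt_trans Real.exp_one_lt_d9 (by norm_num))
  have h4 : 3 * (m : ℝ) + 1 ≤ 2 ^ (m + 1) := by exact_mod_cast aux_nat2 m hm
  have hm0 : (0 : ℝ) ≤ m := Nat.cast_nonneg m
  nlinarith [mul_le_mul_of_nonneg_left (h1.trans h3) hm0]

set_option maxHeartbeats 1000000

/-- **Intermediate norm estimate** in the proof of the paper's stability lemma for
approximate order-`m` unitaries: if `v` satisfies `‖v*v − 1‖ ≤ ε`, `‖vv* − 1‖ ≤ ε` and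
`‖v^m − 1‖ ≤ ε` with `0 ≤ ε < 2^(-m)`, then the unitary `u₀ := v • (v v*)^(-1/2)`
(inverse square root via the continuous functional calculus) satisfies
`‖u₀^m − 1‖ ≤ 2^(m+1) * ε`. -/
theorem stmt_3 {A : Type*} [CStarAlgebra A]
    (m : ℕ) (hm : 1 ≤ m) (ε : ℝ) (hε0 : 0 ≤ ε) (hε : ε < (2 : ℝ) ^ (-(m : ℤ)))
    (v : A)
    (h1 : ‖star v * v - 1‖ ≤ ε) (h2 : ‖v * star v - 1‖ ≤ ε)
    (h3 : ‖v ^ m - 1‖ ≤ ε) :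
    ‖(v * cfc (fun t : ℝ => t ^ (-(1 / 2 : ℝ))) (v * star v)) ^ m - 1‖ ≤
      2 ^ (m + 1) * ε := by
  obtain (hsub | hnt) := subsingleton_or_nontrivial A
  · have hz : ((v * cfc (fun t : ℝ => t ^ (-(1 / 2 : ℝ))) (v * star v)) ^ m - 1 : A) = 0 :=
      Subsingleton.elim _ _
    rw [hz, norm_zero]
    positivity
  -- basic bounds on ε
  have hεinv : ε ≤ ((2 : ℝ) ^ m)⁻¹ := by
    rw [zpow_neg, zpow_natCast] at hε
    exact hε.le
  have hεhalf : ε ≤ 1 / 2 := by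
    refine hεinv.trans ?_
    rw [inv_le_comm₀ (by positivity) (by norm_num)]
    calc (1 / 2 : ℝ)⁻¹ = 2 ^ 1 := by norm_num
    _ ≤ 2 ^ m := pow_le_pow_right₀ (by norm_num) hm
  set f : ℝ → ℝ := fun t => t ^ (-(1 / 2 : ℝ)) with hfdef
  set b : A := v * star v with hbdef
  have hbsa : IsSelfAdjoint b := IsSelfAdjoint.mul_star_self v
  -- spectrum bounds
  have hspec : ∀ t ∈ spectrum ℝ b, 1 - ε ≤ t ∧ t ≤ 1 + ε := by
    intro t ht
    have hmem : t - 1 ∈ spectrum ℝ (b - algebraMap ℝ A 1) := by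
      rw [← spectrum.sub_singleton_eq]
      exact Set.sub_mem_sub ht rfl
    have hnorm := spectrum.norm_le_norm_of_mem hmem
    rw [map_one] at hnorm
    have h' : |t - 1| ≤ ε := by
      rw [Real.norm_eq_abs] at hnorm
      exact hnorm.trans h2
    have := abs_le.mp h'
    constructor <;> linarith [this.1, this.2]
  have hspec_pos : ∀ t ∈ spectrum ℝ b, (0 : ℝ) < t := fun t ht => by
    linarith [(hspec t ht).1]
  -- continuity of f on spectrum
  have hfc : ContinuousOn f (spectrum ℝ b) := by
    apply ContinuousOn.rpow_const continuousOn_id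
    exact fun t ht => Or.inl (ne_of_gt (hspec_pos t ht))
  -- pointwise estimates
  have hpt : ∀ t ∈ spectrum ℝ b, |f t - 1| ≤ ε ∧ 0 ≤ f t ∧ f t ≤ 1 + ε := by
    intro t ht
    obtain ⟨hl, hr⟩ := hspec t ht
    have htpos : (0 : ℝ) < t := hspec_pos t ht
    set s : ℝ := Real.sqrt t with hs
    have hspos : 0 < s := Real.sqrt_pos.mpr htpos
    have hs2 : s ^ 2 = t := Real.sq_sqrt htpos.le
    have hft : f t = s⁻¹ := by
      rw [hfdef]
      simp only
      rw [Real.rpow_neg htpos.le, ← Real.sqrt_eq_rpow]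
    have hcube : (0 : ℝ) ≤ 1 - ε - ε ^ 2 := by nlinarith [sq_nonneg ε]
    have hup : s⁻¹ ≤ 1 + ε := by
      have hsl : 0 ≤ s ^ 2 - (1 - ε) := by linarith [hs2, hl]
      have key : 1 ≤ (s * (1 + ε)) ^ 2 := by
        nlinarith [mul_nonneg hε0 hcube, sq_nonneg (1 + ε), mul_nonneg hsl (sq_nonneg (1 + ε))]
      have h6 : 1 ≤ s * (1 + ε) := by
        nlinarith [key, mul_pos hspos (show (0:ℝ) < 1 + ε by linarith)]
      calc s⁻¹ ≤ s⁻¹ * (s * (1 + ε)) := le_mul_of_one_le_right (by positivity) h6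
      _ = 1 + ε := by rw [← mul_assoc, inv_mul_cancel₀ (ne_of_gt hspos), one_mul]
    have hlo : 1 - ε ≤ s⁻¹ := by
      have h7 : (1 - ε) * s ≤ 1 := by
        have hsu : s ^ 2 ≤ 1 + ε := by linarith [hs2, hr]
        have hnn : 0 ≤ (1 - ε) * s := mul_nonneg (by linarith) hspos.le
        nlinarith [mul_nonneg hε0 (mul_nonneg hε0 hε0), sq_nonneg ε, hnn, hsu,
          mul_nonneg (mul_nonneg hε0 hε0) hspos.le]
      calc 1 - ε = ((1 - ε) * s) * s⁻¹ := by
            rw [mul_assoc, mul_inv_cancel₀ (ne_of_gt hspos), mul_one]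
      _ ≤ 1 * s⁻¹ := mul_le_mul_of_nonneg_right h7 (by positivity)
      _ = s⁻¹ := one_mul _
    refine ⟨abs_le.mpr ⟨by rw [hft]; linarith, by rw [hft]; linarith⟩, ?_, ?_⟩
    · rw [hft]; positivity
    · rw [hft]; exact hup
  -- norm estimates
  set c : A := cfc f b with hcdef
  have hcnorm : ‖c‖ ≤ 1 + ε :=
    norm_cfc_le (by linarith) fun t ht => by
      rw [Real.norm_eq_abs, abs_of_nonneg (hpt t ht).2.1]
      exact (hpt t ht).2.2
  have hcone : ‖c - 1‖ ≤ ε := by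
    have hsplit : c - 1 = cfc (fun t => f t - 1) b := by
      rw [hcdef, cfc_sub f (fun _ => 1) b hfc continuousOn_const, cfc_const_one ℝ b]
    rw [hsplit]
    exact norm_cfc_le hε0 fun t ht => by
      rw [Real.norm_eq_abs]; exact (hpt t ht).1
  have hbnorm : ‖b‖ ≤ 1 + ε := by
    calc ‖b‖ = ‖b - 1 + 1‖ := by rw [sub_add_cancel]
    _ ≤ ‖b - 1‖ + ‖(1 : A)‖ := norm_add_le _ _
    _ ≤ ε + 1 := by rw [norm_one]; exact add_le_add_left h2 1
    _ = 1 + ε := by ring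
  have hvnorm : ‖v‖ ≤ 1 + ε := by
    have hsq : ‖v‖ * ‖v‖ = ‖b‖ := (CStarRing.norm_self_mul_star).symm
    nlinarith [norm_nonneg v]
  set u : A := v * c with hudef
  set C : ℝ := (1 + ε) ^ 2 with hCdef
  have hunorm : ‖u‖ ≤ C := by
    calc ‖u‖ ≤ ‖v‖ * ‖c‖ := norm_mul_le _ _
    _ ≤ (1 + ε) * (1 + ε) := mul_le_mul hvnorm hcnorm (norm_nonneg c) (by linarith)
    _ = C := by rw [hCdef]; ring
  have hvC : ‖v‖ ≤ C := by
    refine hvnorm.trans ?_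
    rw [hCdef]; nlinarith
  have huv : ‖u - v‖ ≤ C * ε := by
    have : u - v = v * (c - 1) := by rw [hudef, mul_sub, mul_one]
    rw [this]
    calc ‖v * (c - 1)‖ ≤ ‖v‖ * ‖c - 1‖ := norm_mul_le _ _
    _ ≤ (1 + ε) * ε := mul_le_mul hvnorm hcone (norm_nonneg _) (by linarith)
    _ ≤ C * ε := by rw [hCdef]; nlinarith [mul_nonneg (mul_nonneg hε0 hε0) hε0, mul_nonneg hε0 hε0]
  -- telescoping
  obtain ⟨n, rfl⟩ : ∃ n, m = n + 1 := ⟨m - 1, (Nat.succ_pred_eq_of_pos hm).symm⟩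
  have htel : ‖u ^ (n + 1) - v ^ (n + 1)‖ ≤ ((n : ℝ) + 1) * C ^ n * ‖u - v‖ :=
    aux_pow_sub_pow u v hunorm hvC n
  have hmain : ‖u ^ (n + 1) - v ^ (n + 1)‖ ≤ ((n : ℝ) + 1) * (1 + ε) ^ (2 * (n + 1)) * ε := by
    refine htel.trans ?_
    calc ((n : ℝ) + 1) * C ^ n * ‖u - v‖ ≤ ((n : ℝ) + 1) * C ^ n * (C * ε) := by
          refine mul_le_mul_of_nonneg_left huv ?_
          rw [hCdef]; positivity
    _ = ((n : ℝ) + 1) * (1 + ε) ^ (2 * (n + 1)) * ε := by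
          rw [hCdef, ← pow_mul]
          ring_nf
  have harith : ((n : ℝ) + 1) * (1 + ε) ^ (2 * (n + 1)) ≤ 2 ^ (n + 1 + 1) - 1 := by
    have := aux_arith (n + 1) (Nat.le_add_left 1 n) ε hε0 hεinv
    push_cast at this ⊢
    convert this using 2
  calc ‖u ^ (n + 1) - 1‖ ≤ ‖u ^ (n + 1) - v ^ (n + 1)‖ + ‖v ^ (n + 1) - 1‖ := by
        have : u ^ (n + 1) - 1 = (u ^ (n + 1) - v ^ (n + 1)) + (v ^ (n + 1) - 1) := by abel
        rw [this]; exact norm_add_le _ _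
  _ ≤ ((n : ℝ) + 1) * (1 + ε) ^ (2 * (n + 1)) * ε + ε := add_le_add hmain h3
  _ ≤ (2 ^ (n + 1 + 1) - 1) * ε + ε := by
        refine add_le_add_left (mul_le_mul_of_nonneg_right harith hε0) ε
  _ = 2 ^ (n + 1 + 1) * ε := by ring
end

section
/- Let A be a unital C*-algebra, let m ≥ 1 be an integer, and let u ∈ A be a unitary with ‖u^m − 1‖ < 2. Then there exists a unitary w ∈ A such that w^m = 1 and ‖u − w‖ ≤ (2/m)·‖u^m − 1‖. -/
open scoped Pointwise

open Complex in
private lemma aux_abs_exp_sub_one (b : ℝ) :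
    ‖Complex.exp (b * Complex.I) - 1‖ = 2 * |Real.sin (b / 2)| := by
  rw [Complex.exp_mul_I]
  have h1 : (Complex.cos b + Complex.sin b * Complex.I - 1)
      = Complex.mk (Real.cos b - 1) (Real.sin b) := by
    apply Complex.ext <;> simp [Complex.cos_ofReal_re, Complex.sin_ofReal_re]
  rw [h1, Complex.norm_def, Complex.normSq_mk]
  have hcos : Real.cos b = 1 - 2 * Real.sin (b / 2) ^ 2 := by
    have h2 := Real.sin_sq_add_cos_sq (b / 2)
    have h3 := Real.cos_two_mul (b / 2)
    rw [show 2 * (b / 2) = b by ring] at h3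
    nlinarith
  have hsin2 : Real.sin b ^ 2 = (1 - Real.cos b) * (1 + Real.cos b) := by
    have := Real.sin_sq_add_cos_sq b; nlinarith
  have : (Real.cos b - 1) * (Real.cos b - 1) + Real.sin b * Real.sin b
      = (2 * |Real.sin (b / 2)|) ^ 2 := by
    rw [show (2 * |Real.sin (b/2)|)^2 = 4 * |Real.sin (b/2)|^2 by ring, _root_.sq_abs]
    nlinarith
  rw [this, Real.sqrt_sq (by positivity)]

private lemma aux_sin_ineq {m : ℕ} (hm : 1 ≤ m) {b : ℝ} (hb : |b| ≤ Real.pi) :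
    2 * |Real.sin (b / (2 * m))| ≤ (2 / m) * (2 * |Real.sin (b / 2)|) := by
  have hm0 : (0:ℝ) < m := by exact_mod_cast hm
  have hm1 : (1:ℝ) ≤ m := by exact_mod_cast hm
  have hpi := Real.pi_pos
  wlog hb0 : 0 ≤ b generalizing b
  · have := this (b := -b) (by rwa [abs_neg]) (by linarith)
    simpa [neg_div, Real.sin_neg, abs_neg] using this
  rw [abs_of_nonneg hb0] at hb
  have h1 : |Real.sin (b / (2 * m))| = Real.sin (b / (2 * m)) := by
    rw [abs_of_nonneg]
    apply Real.sin_nonneg_of_nonneg_of_le_pi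
    · positivity
    · rw [div_le_iff₀ (by positivity)]; nlinarith
  have h2 : |Real.sin (b / 2)| = Real.sin (b / 2) := by
    rw [abs_of_nonneg]
    apply Real.sin_nonneg_of_nonneg_of_le_pi
    · positivity
    · nlinarith
  rw [h1, h2]
  have hle : Real.sin (b / (2 * m)) ≤ b / (2 * m) :=
    Real.sin_le (by positivity)
  have hge : 2 / Real.pi * (b / 2) ≤ Real.sin (b / 2) :=
    Real.mul_le_sin (by positivity) (by linarith)
  have hpi4 : Real.pi ≤ 4 := Real.pi_le_four
  have e1 : 2 * Real.sin (b / (2 * m)) ≤ b / m := by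
    have : 2 * (b / (2 * (m:ℝ))) = b / m := by
      field_simp
    linarith
  have e2 : (2 / (m:ℝ)) * (2 * (2 / Real.pi * (b / 2))) ≤ 2 / m * (2 * Real.sin (b / 2)) := by
    gcongr
  have e2' : (2 / (m:ℝ)) * (2 * (2 / Real.pi * (b / 2))) = 4 * b / (m * Real.pi) := by
    field_simp; ring
  have e3 : b / m ≤ 4 * b / (m * Real.pi) := by
    rw [div_le_div_iff₀ hm0 (by positivity)]
    nlinarith [mul_nonneg (mul_nonneg hb0 hm0.le) (show (0:ℝ) ≤ 4 - Real.pi by linarith)]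
  linarith [e2' ▸ e2]

/-- **Spectral-arc-collapsing step** of the paper's stability lemma: if `u` is a unitary
in a unital C*-algebra with `‖u^m − 1‖ < 2`, then its spectrum lies in disjoint arcs
around the `m`-th roots of unity, and collapsing each arc to its root of unity yields a
unitary `w` with `w^m = 1` and `‖u − w‖ ≤ (2/m) * ‖u^m − 1‖`. -/
theorem stmt_4 {A : Type*} [CStarAlgebra A]
    (m : ℕ) (hm : 1 ≤ m) (u : A) (hu : u ∈ unitary A)
    (h : ‖u ^ m - 1‖ < 2) :
    ∃ w : A, w ∈ unitary A ∧ w ^ m = 1 ∧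
      ‖u - w‖ ≤ (2 / (m : ℝ)) * ‖u ^ m - 1‖ := by
  have hsn : IsStarNormal u := isStarNormal_of_mem_unitary hu
  have hm0 : (0:ℝ) < m := by exact_mod_cast hm
  obtain hA | hA := subsingleton_or_nontrivial A
  · refine ⟨1, one_mem _, one_pow m, ?_⟩
    rw [Subsingleton.elim (u - 1) (0:A), norm_zero]
    positivity
  set f : ℂ → ℂ := fun z => z * Complex.exp ((↑(-(z ^ m).arg / m) : ℂ) * Complex.I)
    with hf_def
  have hsphere : ∀ z ∈ spectrum ℂ u, ‖z‖ = 1 := by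
    intro z hz
    have := spectrum.subset_circle_of_unitary hu hz
    rw [Metric.mem_sphere, dist_zero_right] at this
    simpa using this
  have habs : ∀ z ∈ spectrum ℂ u, ‖z ^ m‖ = 1 := by
    intro z hz; rw [norm_pow, hsphere z hz, one_pow]
  have hpowmem : ∀ z ∈ spectrum ℂ u, z ^ m ∈ spectrum ℂ (u ^ m) := fun z hz =>
    spectrum.pow_image_subset u m ⟨z, hz, rfl⟩
  have hsub : ∀ z ∈ spectrum ℂ u, ‖z ^ m - 1‖ ≤ ‖u ^ m - 1‖ := by
    intro z hz
    apply spectrum.norm_le_norm_of_mem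
    have h1 : (1:ℂ) ∈ ({1} : Set ℂ) := rfl
    have : z ^ m - 1 ∈ spectrum ℂ (u ^ m) - ({1} : Set ℂ) :=
      Set.sub_mem_sub (hpowmem z hz) h1
    rwa [spectrum.sub_singleton_eq, map_one] at this
  have hzm : ∀ z ∈ spectrum ℂ u, z ^ m = Complex.exp (((z ^ m).arg : ℂ) * Complex.I) := by
    intro z hz
    have h1 := Complex.norm_mul_exp_arg_mul_I (z ^ m)
    rw [habs z hz, Complex.ofReal_one, one_mul] at h1
    exact h1.symm
  have hslit : ∀ z ∈ spectrum ℂ u, z ^ m ∈ Complex.slitPlane := by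
    intro z hz
    rw [Complex.mem_slitPlane_iff]
    by_contra hcon
    push_neg at hcon
    obtain ⟨hre, him⟩ := hcon
    have hns := Complex.sq_norm (z ^ m)
    rw [habs z hz] at hns
    have hre2 : (z ^ m).re = -1 := by
      rw [Complex.normSq_apply, him] at hns
      nlinarith
    have hzm1 : z ^ m = -1 := by
      apply Complex.ext <;> simp [hre2, him]
    have h2 : ‖z ^ m - 1‖ = 2 := by
      rw [hzm1]
      norm_num [show (-1 : ℂ) - 1 = -2 by ring]
    linarith [hsub z hz]
  have hfc : ContinuousOn f (spectrum ℂ u) := by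
    intro z hz
    apply ContinuousAt.continuousWithinAt
    have h1 : ContinuousAt (fun w : ℂ => w ^ m) z := (continuous_pow m).continuousAt
    have h2 : ContinuousAt (fun w : ℂ => (w ^ m).arg) z :=
      ContinuousAt.comp (g := Complex.arg) (f := fun w : ℂ => w ^ m)
        (Complex.continuousAt_arg (hslit z hz)) h1
    have h3 : ContinuousAt (fun w : ℂ => ((-(w ^ m).arg / m : ℝ) : ℂ)) z :=
      Complex.continuous_ofReal.continuousAt.comp ((h2.neg).div_const m)
    exact continuousAt_id.mul ((h3.mul continuousAt_const).cexp)
  have hfabs : ∀ z ∈ spectrum ℂ u, ‖f z‖ = 1 := by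
    intro z hz
    rw [hf_def]
    simp only [norm_mul, Complex.norm_exp_ofReal_mul_I, hsphere z hz, mul_one]
  have hfm : ∀ z ∈ spectrum ℂ u, f z ^ m = 1 := by
    intro z hz
    rw [hf_def]
    simp only
    rw [mul_pow]
    have harg : (m : ℂ) * ((↑(-(z ^ m).arg / m) : ℂ) * Complex.I)
        = -(((z ^ m).arg : ℂ) * Complex.I) := by
      have hmne : (m : ℂ) ≠ 0 := by exact_mod_cast hm0.ne'
      push_cast
      field_simp
    have hexp : ∀ c : ℂ, Complex.exp c * Complex.exp (-c) = 1 := fun c => by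
      rw [← Complex.exp_add, add_neg_cancel, Complex.exp_zero]
    calc z ^ m * Complex.exp ((↑(-(z ^ m).arg / m) : ℂ) * Complex.I) ^ m
        = z ^ m * Complex.exp (-(((z ^ m).arg : ℂ) * Complex.I)) := by
          rw [← Complex.exp_nat_mul, harg]
      _ = Complex.exp (((z ^ m).arg : ℂ) * Complex.I)
            * Complex.exp (-(((z ^ m).arg : ℂ) * Complex.I)) :=
          congrArg (fun t => t * Complex.exp (-(((z ^ m).arg : ℂ) * Complex.I))) (hzm z hz)
      _ = 1 := hexp _
  have hkey : ∀ z ∈ spectrum ℂ u, ‖z - f z‖ ≤ 2 / (m:ℝ) * ‖u ^ m - 1‖ := by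
    intro z hz
    set a := (z ^ m).arg with ha
    have hnorm1 : ‖z - f z‖ = 2 * |Real.sin (a / (2 * m))| := by
      have hzf : z - f z = z * (1 - Complex.exp ((↑(-a / m) : ℂ) * Complex.I)) := by
        rw [hf_def]; ring
      rw [hzf, norm_mul, hsphere z hz, one_mul, norm_sub_rev,
        aux_abs_exp_sub_one (-a / m),
        show -a / m / 2 = -(a / (2 * m)) by ring, Real.sin_neg, abs_neg]
    have hnorm2 : ‖z ^ m - 1‖ = 2 * |Real.sin (a / 2)| := by
      rw [hzm z hz, aux_abs_exp_sub_one a]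
    calc ‖z - f z‖ = 2 * |Real.sin (a / (2 * m))| := hnorm1
      _ ≤ 2 / m * (2 * |Real.sin (a / 2)|) := aux_sin_ineq hm (Complex.abs_arg_le_pi _)
      _ = 2 / m * ‖z ^ m - 1‖ := by rw [hnorm2]
      _ ≤ 2 / m * ‖u ^ m - 1‖ := by
          exact mul_le_mul_of_nonneg_left (hsub z hz) (by positivity)
  refine ⟨cfc f u, ?_, ?_, ?_⟩
  · rw [Unitary.mem_iff]
    have hone : ∀ z ∈ spectrum ℂ u, f z * star (f z) = 1 := by
      intro z hz
      rw [RCLike.star_def, Complex.mul_conj, Complex.normSq_eq_norm_sq, hfabs z hz]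
      norm_num
    constructor
    · rw [← cfc_star f u, ← cfc_mul _ _ u hfc.star hfc]
      rw [cfc_congr (g := fun _ => (1 : ℂ)) fun z hz => by
        simpa [mul_comm] using hone z hz]
      exact cfc_const_one ℂ u
    · rw [← cfc_star f u, ← cfc_mul _ _ u hfc hfc.star]
      rw [cfc_congr (g := fun _ => (1 : ℂ)) fun z hz => hone z hz]
      exact cfc_const_one ℂ u
  · rw [← cfc_pow f m u hfc]
    rw [cfc_congr (g := fun _ => (1 : ℂ)) fun z hz => hfm z hz]
    exact cfc_const_one ℂ u
  · have hd : u - cfc f u = cfc (fun z : ℂ => z - f z) u := by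
      rw [cfc_sub (fun z : ℂ => z) f u continuousOn_id hfc, cfc_id' ℂ u]
    rw [hd]
    exact norm_cfc_le (by positivity) hkey
end

section
/- Let m ≥ 1 be an integer and let λ ∈ ℂ satisfy |λ| = 1 and |λ^m − 1| < 2. Then there exists μ ∈ ℂ with μ^m = 1 and |λ − μ| ≤ (2/m)·|λ^m − 1|. -/
open Complex Real

/-- Chord length formula: `|e^{ia} - e^{ib}| = 2 |sin ((a-b)/2)|`. -/
lemma abs_exp_mul_I_sub_exp_mul_I (a b : ℝ) :
    ‖Complex.exp (a * I) - Complex.exp (b * I)‖ =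
      2 * |Real.sin ((a - b) / 2)| := by
  have key : Complex.exp (a * I) - Complex.exp (b * I) =
      Complex.exp ((((a + b) / 2 : ℝ)) * I) *
        (2 * Complex.sin (((a - b) / 2 : ℝ)) * I) := by
    rw [Complex.two_sin]
    have hII : ((Complex.exp (-(((a - b) / 2 : ℝ) : ℂ) * I) -
        Complex.exp ((((a - b) / 2 : ℝ) : ℂ) * I)) * I) * I =
        Complex.exp ((((a - b) / 2 : ℝ) : ℂ) * I) -
          Complex.exp (-(((a - b) / 2 : ℝ) : ℂ) * I) := by
      rw [mul_assoc, Complex.I_mul_I]; ring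
    rw [hII, mul_sub, ← Complex.exp_add, ← Complex.exp_add]
    congr 2 <;> push_cast <;> ring
  rw [key, norm_mul, Complex.norm_exp_ofReal_mul_I, one_mul, norm_mul, norm_mul, Complex.norm_I,
    mul_one, Complex.norm_two, ← Complex.ofReal_sin, Complex.norm_real, Real.norm_eq_abs]

/-- **Scalar trigonometric estimate** behind the spectral-arc-collapsing step: every point
`λ` of the unit circle with `|λ^m − 1| < 2` is within `(2/m) * |λ^m − 1|` of some `m`-th
root of unity `μ`. -/
theorem stmt_5 (m : ℕ) (hm : 1 ≤ m) (lam : ℂ)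
    (hlam : ‖lam‖ = 1) (h : ‖lam ^ m - 1‖ < 2) :
    ∃ mu : ℂ, mu ^ m = 1 ∧
      ‖lam - mu‖ ≤ (2 / (m : ℝ)) * ‖lam ^ m - 1‖ := by
  have hm0 : (0 : ℝ) < m := by exact_mod_cast hm
  have hmR : (m : ℝ) ≠ 0 := hm0.ne'
  have hmC : (m : ℂ) ≠ 0 := by exact_mod_cast hmR
  have hπ : (0 : ℝ) < π := Real.pi_pos
  set θ : ℝ := lam.arg with hθdef
  have hlam' : lam = Complex.exp (θ * I) := by
    have := Complex.norm_mul_exp_arg_mul_I lam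
    rw [hlam] at this
    simpa using this.symm
  set k : ℤ := round ((m : ℝ) * θ / (2 * π)) with hkdef
  set μ : ℂ := Complex.exp (((2 * π * k / m : ℝ)) * I) with hμdef
  have hμm : μ ^ m = 1 := by
    rw [hμdef, ← Complex.exp_nat_mul]
    have : (m : ℂ) * (((2 * π * k / m : ℝ)) * I) = (k : ℂ) * (2 * (π : ℂ) * I) := by
      push_cast
      field_simp
    rw [this, Complex.exp_int_mul_two_pi_mul_I]
  set δ : ℝ := ((m : ℝ) * θ - 2 * π * k) / 2 with hδdef
  have hδle : |δ| ≤ π / 2 := by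
    have h1 : |(m : ℝ) * θ / (2 * π) - k| ≤ 1 / 2 := abs_sub_round _
    have heq : δ = ((m : ℝ) * θ / (2 * π) - k) * π := by
      rw [hδdef]; field_simp
    rw [heq, abs_mul, abs_of_pos hπ]
    calc |(m : ℝ) * θ / (2 * π) - k| * π ≤ 1 / 2 * π :=
          mul_le_mul_of_nonneg_right h1 hπ.le
      _ = π / 2 := by ring
  have hpow : ‖lam ^ m - 1‖ = 2 * |Real.sin δ| := by
    have h1 : lam ^ m = Complex.exp ((((m : ℝ) * θ : ℝ) : ℂ) * I) := by
      rw [hlam', ← Complex.exp_nat_mul]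
      congr 1
      push_cast
      ring
    have h2 : (1 : ℂ) = Complex.exp (((2 * π * k : ℝ) : ℂ) * I) := by
      rw [show ((2 * π * k : ℝ) : ℂ) * I = (k : ℂ) * (2 * (π : ℂ) * I) by push_cast; ring,
        Complex.exp_int_mul_two_pi_mul_I]
    rw [h1, h2, abs_exp_mul_I_sub_exp_mul_I]
  have hdiff : ‖lam - μ‖ = 2 * |Real.sin (δ / m)| := by
    rw [hlam', hμdef, abs_exp_mul_I_sub_exp_mul_I]
    congr 2
    rw [hδdef]
    field_simp
  refine ⟨μ, hμm, ?_⟩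
  rw [hpow, hdiff]
  have hb1 : |Real.sin (δ / m)| ≤ |δ| / m := by
    calc |Real.sin (δ / m)| ≤ |δ / m| := Real.abs_sin_le_abs
      _ = |δ| / m := by rw [abs_div, abs_of_pos hm0]
  have hb2 : 2 / π * |δ| ≤ |Real.sin δ| := Real.mul_abs_le_abs_sin hδle
  have hπ4 : π ≤ 4 := by linarith [Real.pi_le_four]
  have hb3 : |δ| ≤ 2 * |Real.sin δ| := by
    have h4 : |δ| / 2 ≤ 2 / π * |δ| := by
      rw [show 2 / π * |δ| = 2 * |δ| / π by ring, div_le_div_iff₀ two_pos hπ]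
      nlinarith [abs_nonneg δ]
    linarith
  calc 2 * |Real.sin (δ / m)| ≤ 2 * (|δ| / m) := by linarith
    _ ≤ 2 / m * (2 * |Real.sin δ|) := by
        rw [show 2 * (|δ| / (m : ℝ)) = 2 * |δ| / m by ring,
          show 2 / (m : ℝ) * (2 * |Real.sin δ|) = 2 * (2 * |Real.sin δ|) / m by ring]
        gcongr
end
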